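/- The group O⁺(2,1)(ℤ), together with the generating triple (r₀, r₁, r₂) = (Ref_{H−E₁−E₂}, Ref_{E₁−E₂}, Ref_{E₂}), is a Coxeter system whose Coxeter matrix M satisfies M(i,i) = 1 for all i, M(0,1) = 2, M(1,2) = 4, and M(0,2) = ∞; that is, O⁺(2,1)(ℤ) is isomorphic, via a map carrying the simple generators to r₀, r₁, r₂, to the triangle group Δ(2,4,∞) with presentation ⟨s₀, s₁, s₂ ∣ s₀² = s₁² = s₂² = (s₀s₁)² = (s₁s₂)⁴ = 1⟩, where s₀s₂ has infinite order. -/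

import Mathlib

open Matrix

/-- The symmetric bilinear form `Q(x,y) = x₀y₀ − x₁y₁ − x₂y₂` on `ℤ³`. -/
def Q3 (x y : Fin 3 → ℤ) : ℤ := x 0 * y 0 - x 1 * y 1 - x 2 * y 2

/-- The Gram matrix `J = diag(1,−1,−1)` of `Q3`. -/
def J3 : Matrix (Fin 3) (Fin 3) ℤ := Matrix.diagonal ![1, -1, -1]

/-- The matrix of the reflection `w ↦ w − (2·Q(v,w)/Q(v,v))·v` about `v`. -/
def reflMat3 (v : Fin 3 → ℤ) : Matrix (Fin 3) (Fin 3) ℤ :=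
  Matrix.of fun i j => (if i = j then 1 else 0) - 2 * Q3 v (Pi.single j 1) / Q3 v v * v i

/-- `r₀ = Ref_{H−E₁−E₂}` as an element of `GL(3,ℤ)`. -/
def refHE1E2 : (Matrix (Fin 3) (Fin 3) ℤ)ˣ :=
  ⟨reflMat3 ![1, -1, -1], reflMat3 ![1, -1, -1], by decide, by decide⟩

/-- `r₁ = Ref_{E₁−E₂}` as an element of `GL(3,ℤ)`. -/
def refE1E2 : (Matrix (Fin 3) (Fin 3) ℤ)ˣ :=
  ⟨reflMat3 ![0, 1, -1], reflMat3 ![0, 1, -1], by decide, by decide⟩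

/-- `r₂ = Ref_{E₂}` as an element of `GL(3,ℤ)`. -/
def refE2 : (Matrix (Fin 3) (Fin 3) ℤ)ˣ :=
  ⟨reflMat3 ![0, 0, 1], reflMat3 ![0, 0, 1], by decide, by decide⟩

/-- The set `O⁺(2,1)(ℤ)` of elements of `GL(3,ℤ)` preserving `J` and with positive
`(0,0)` entry. -/
def Oplus21 : Set (Matrix (Fin 3) (Fin 3) ℤ)ˣ :=
  {A | (A : Matrix (Fin 3) (Fin 3) ℤ)ᵀ * J3 * (A : Matrix (Fin 3) (Fin 3) ℤ) = J3 ∧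
    0 < (A : Matrix (Fin 3) (Fin 3) ℤ) 0 0}

/-- The Coxeter matrix of the triangle group `Δ(2,4,∞)`, with `0` encoding `∞`. -/
def triangleMatrix : CoxeterMatrix (Fin 3) where
  M := Matrix.of ![![1, 2, 0], ![2, 1, 4], ![0, 4, 1]]
  off_diagonal := by
    intro i i' h
    fin_cases i <;> fin_cases i' <;> first | exact absurd rfl h | (simp; done) | decide

noncomputable section
abbrev W := triangleMatrix.Group
def cs : CoxeterSystem triangleMatrix W := triangleMatrix.toCoxeterSystem
def fgen : Fin 3 → (Matrix (Fin 3) (Fin 3) ℤ)ˣ := ![refHE1E2, refE1E2, refE2]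
lemma hlift : triangleMatrix.IsLiftable fgen := by
  intro i j; fin_cases i <;> fin_cases j <;> decide
def phi : W →* (Matrix (Fin 3) (Fin 3) ℤ)ˣ := cs.lift ⟨fgen, hlift⟩
lemma phi_simple (i : Fin 3) : phi (triangleMatrix.simple i) = fgen i := by
  have := cs.lift_apply_simple hlift i
  rwa [show cs.simple i = triangleMatrix.simple i from rfl] at this

def s0 : W := cs.simple 0
def s1 : W := cs.simple 1
def s2 : W := cs.simple 2
def tw : W := s1 * s2

lemma hs0 : s0 * s0 = 1 := cs.simple_mul_simple_self 0
lemma hs1 : s1 * s1 = 1 := cs.simple_mul_simple_self 1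
lemma hs2 : s2 * s2 = 1 := cs.simple_mul_simple_self 2
lemma htw4 : tw ^ 4 = 1 := by
  have := cs.simple_mul_simple_pow 1 2
  rwa [show triangleMatrix 1 2 = 4 from rfl] at this
lemma hcomm : s0 * s1 = s1 * s0 := by
  have h : (s0 * s1) * (s0 * s1) = 1 := by
    have h := cs.simple_mul_simple_pow 0 1
    rw [show triangleMatrix 0 1 = 2 from rfl, sq] at h
    exact h
  have h2 : (s0 * s1)⁻¹ = s0 * s1 := inv_eq_of_mul_eq_one_right h
  rw [← h2, _root_.mul_inv_rev, show s1⁻¹ = s1 from cs.inv_simple 1,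
    show s0⁻¹ = s0 from cs.inv_simple 0]
lemma hsemi : ∀ i : ℤ, s1 * tw ^ i = tw ^ (-i) * s1 := by
  have h : SemiconjBy s1 tw tw⁻¹ := by
    unfold SemiconjBy tw
    rw [← mul_assoc, hs1, one_mul, _root_.mul_inv_rev, mul_assoc,
      show s2⁻¹ = s2 from cs.inv_simple 2, show s1⁻¹ = s1 from cs.inv_simple 1, hs1, mul_one]
  intro i
  have := h.zpow_right i
  rwa [_root_.inv_zpow, ← _root_.zpow_neg] at this
lemma tw_zpow (i : ℤ) : tw ^ i = tw ^ (i % 4).toNat := by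
  conv_lhs => rw [show i = 4 * (i / 4) + i % 4 by omega]
  rw [_root_.zpow_add, _root_.zpow_mul, show (4:ℤ) = ((4:ℕ):ℤ) by norm_num, zpow_natCast, htw4,
    _root_.one_zpow, one_mul, ← zpow_natCast, Int.toNat_of_nonneg (by omega)]

def inA (w : W) : Prop := ∃ i : ℤ, w = tw ^ i ∨ w = tw ^ i * s1
def inB (w : W) : Prop := (w = 1 ∨ w = s0) ∨ (w = s1 ∨ w = s0 * s1)

lemma inA_one : inA 1 := ⟨0, Or.inl (by simp)⟩
lemma inA_s1 : inA s1 := ⟨0, Or.inr (by simp)⟩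
lemma inA_s2 : inA s2 := ⟨-1, Or.inr (by
  rw [← hsemi 1, zpow_one]; unfold tw; rw [← mul_assoc, hs1, one_mul])⟩
lemma inB_one : inB 1 := Or.inl (Or.inl rfl)
lemma inB_s0 : inB s0 := Or.inl (Or.inr rfl)
lemma inB_s1 : inB s1 := Or.inr (Or.inl rfl)

lemma inA_mul {x y : W} (hx : inA x) (hy : inA y) : inA (x * y) := by
  obtain ⟨i, hi⟩ := hx
  obtain ⟨j, hj⟩ := hy
  rcases hi with rfl | rfl <;> rcases hj with rfl | rfl
  · exact ⟨i + j, Or.inl (by rw [_root_.zpow_add])⟩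
  · exact ⟨i + j, Or.inr (by rw [_root_.zpow_add, mul_assoc])⟩
  · refine ⟨i - j, Or.inr ?_⟩
    rw [mul_assoc, hsemi, ← mul_assoc, ← _root_.zpow_add]; ring_nf
  · refine ⟨i - j, Or.inl ?_⟩
    rw [mul_assoc, ← mul_assoc s1, hsemi, mul_assoc, hs1, mul_one, ← _root_.zpow_add]; ring_nf
lemma inB_mul {x y : W} (hx : inB x) (hy : inB y) : inB (x * y) := by
  have e1 : s0 * (s0 * s1) = s1 := by rw [← mul_assoc, hs0, one_mul]
  have e2 : s1 * (s0 * s1) = s0 := by rw [hcomm, ← mul_assoc, hs1, one_mul]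
  have e3 : (s0 * s1) * s0 = s1 := by rw [hcomm, mul_assoc, hs0, mul_one]
  have e4 : (s0 * s1) * s1 = s0 := by rw [mul_assoc, hs1, mul_one]
  have e5 : (s0 * s1) * (s0 * s1) = 1 := by rw [← mul_assoc, e3, hs1]
  have e6 : s0 * s1 = s1 * s0 := hcomm
  rcases hx with (rfl | rfl) | (rfl | rfl) <;> rcases hy with (rfl | rfl) | (rfl | rfl) <;>
    unfold inB <;> simp only [one_mul, mul_one, hs0, hs1, e1, e2, e3, e4, e5, ← e6] <;> tauto

def R : (Matrix (Fin 3) (Fin 3) ℤ)ˣ := refE1E2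
def R0 : (Matrix (Fin 3) (Fin 3) ℤ)ˣ := refHE1E2
def Tm : (Matrix (Fin 3) (Fin 3) ℤ)ˣ := refE1E2 * refE2

lemma phi_s0 : phi s0 = R0 := phi_simple 0
lemma phi_s1 : phi s1 = R := phi_simple 1
lemma phi_s2 : phi s2 = refE2 := phi_simple 2
lemma phi_tw : phi tw = Tm := by rw [tw, _root_.map_mul, phi_s1, phi_s2]; rfl

abbrev isZ (m : (Matrix (Fin 3) (Fin 3) ℤ)ˣ) : Prop := m = 1 ∨ m = R

lemma isZ_cancel {x y : (Matrix (Fin 3) (Fin 3) ℤ)ˣ} (hx : isZ x) (hy : ¬ isZ y) :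
    ¬ isZ (x * y) := by
  intro h
  apply hy
  rcases hx with rfl | rfl
  · rwa [one_mul] at h
  · have key : y = R * (R * y) := by rw [← mul_assoc, show R * R = 1 by decide, one_mul]
    rcases h with h | h
    · rw [h, mul_one] at key; exact Or.inr key
    · rw [h] at key; rw [key]; left; decide

lemma inA_normal {w : W} (h : inA w) : ∃ r : ℕ, r < 4 ∧ (w = tw ^ r ∨ w = tw ^ r * s1) := by
  obtain ⟨i, hi⟩ := h
  refine ⟨(i % 4).toNat, by omega, ?_⟩
  rcases hi with rfl | rfl
  · exact Or.inl (tw_zpow i)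
  · exact Or.inr (by rw [tw_zpow i])

lemma injA' {w : W} (h : inA w) (hz : isZ (phi w)) : w = 1 ∨ w = s1 := by
  obtain ⟨r, hr, hw⟩ := inA_normal h
  interval_cases r <;> rcases hw with rfl | rfl <;>
      simp only [_root_.map_mul, _root_.map_pow, phi_tw, phi_s1, pow_zero, pow_one, one_mul,
        _root_.map_one] at hz <;>
      (try simp only [pow_zero, pow_one, one_mul]) <;>
      first | tauto | exact absurd hz (by decide)
lemma injA1 {w : W} (h : inA w) (h1 : phi w = 1) : w = 1 := by
  rcases injA' h (Or.inl h1) with rfl | rfl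
  · rfl
  · rw [phi_s1] at h1; exact absurd h1 (by decide)
lemma valA {w : W} (h : inA w) (hz : ¬ isZ (phi w)) :
    phi w = Tm ∨ phi w = Tm^2 ∨ phi w = Tm^3 ∨
    phi w = Tm*R ∨ phi w = Tm^2*R ∨ phi w = Tm^3*R := by
  obtain ⟨r, hr, hw⟩ := inA_normal h
  interval_cases r <;> rcases hw with rfl | rfl <;>
      simp only [_root_.map_mul, _root_.map_pow, phi_tw, phi_s1, pow_zero, pow_one, one_mul,
        _root_.map_one] at hz ⊢ <;>
      first | tauto | exact absurd (Or.inl rfl) hz | exact absurd (Or.inr rfl) hz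
lemma injB' {w : W} (h : inB w) (hz : isZ (phi w)) : w = 1 ∨ w = s1 := by
  rcases h with (rfl | rfl) | (rfl | rfl)
  · exact Or.inl rfl
  · rw [phi_s0] at hz; exact absurd hz (by decide)
  · exact Or.inr rfl
  · rw [_root_.map_mul, phi_s0, phi_s1] at hz; exact absurd hz (by decide)
lemma injB1 {w : W} (h : inB w) (h1 : phi w = 1) : w = 1 := by
  rcases injB' h (Or.inl h1) with rfl | rfl
  · rfl
  · rw [phi_s1] at h1; exact absurd h1 (by decide)
lemma valB {w : W} (h : inB w) (hz : ¬ isZ (phi w)) :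
    phi w = R0 ∨ phi w = R0 * R := by
  rcases h with (rfl | rfl) | (rfl | rfl)
  · exact absurd (Or.inl (map_one phi)) hz
  · exact Or.inl phi_s0
  · exact absurd (Or.inr phi_s1) hz
  · exact Or.inr (by rw [_root_.map_mul, phi_s0, phi_s1])

def typeA (c : W) : Prop := inA c ∧ ¬ isZ (phi c)
def typeB (c : W) : Prop := inB c ∧ ¬ isZ (phi c)

def altP : Bool → List W → Prop
  | _, [] => True
  | b, c :: l => (if b then typeA c else typeB c) ∧ altP (!b) l

def Repr' (w : W) : Prop := inA w ∨ inB w ∨ ∃ b l, 2 ≤ l.length ∧ altP b l ∧ l.prod = w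

lemma inAofZ {x : W} (h : x = 1 ∨ x = s1) : inA x := by
  rcases h with rfl | rfl; exacts [inA_one, inA_s1]
lemma inBofZ {x : W} (h : x = 1 ∨ x = s1) : inB x := by
  rcases h with rfl | rfl; exacts [inB_one, inB_s1]

lemma ne_nil_of_len {α : Type*} {l : List α} {c : α} (h : 2 ≤ (c :: l).length) :
    ∃ c2 l2, l = c2 :: l2 := by
  cases l with
  | nil => simp at h
  | cons a b => exact ⟨a, b, rfl⟩

lemma mul_repr {x w : W} (hx : inA x ∨ inB x) (h : Repr' w) : Repr' (x * w) := by
  by_cases hz : isZ (phi x)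
  · have hx1 : x = 1 ∨ x = s1 := hx.elim (fun h' => injA' h' hz) (fun h' => injB' h' hz)
    have hxA : inA x := inAofZ hx1
    have hxB : inB x := inBofZ hx1
    rcases h with hA | hB | ⟨b, l, hlen, halt, rfl⟩
    · exact Or.inl (inA_mul hxA hA)
    · exact Or.inr (Or.inl (inB_mul hxB hB))
    · obtain ⟨c, rest, rfl⟩ : ∃ c rest, l = c :: rest := by
        cases l with
        | nil => simp at hlen
        | cons a b => exact ⟨a, b, rfl⟩
      obtain ⟨hc, hrest⟩ := halt
      refine Or.inr (Or.inr ⟨b, (x * c) :: rest, by simpa using hlen, ⟨?_, hrest⟩,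
        by rw [List.prod_cons, List.prod_cons, ← mul_assoc]⟩)
      cases b
      · have hc' : typeB c := by simpa using hc
        exact ⟨inB_mul hxB hc'.1, by rw [_root_.map_mul]; exact isZ_cancel hz hc'.2⟩
      · have hc' : typeA c := by simpa using hc
        exact ⟨inA_mul hxA hc'.1, by rw [_root_.map_mul]; exact isZ_cancel hz hc'.2⟩
  · rcases hx with hxA | hxB
    · -- type A chunk
      rcases h with hA | hB | ⟨b, l, hlen, halt, rfl⟩
      · exact Or.inl (inA_mul hxA hA)
      · by_cases hzw : isZ (phi w)
        · exact Or.inl (inA_mul hxA (inAofZ (injB' hB hzw)))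
        · refine Or.inr (Or.inr ⟨true, [x, w], ?_, ⟨⟨hxA, hz⟩, ⟨hB, hzw⟩, trivial⟩, ?_⟩)
          · simp
          · simp
      · obtain ⟨c, rest, rfl⟩ : ∃ c rest, l = c :: rest := by
          cases l with
          | nil => simp at hlen
          | cons a b => exact ⟨a, b, rfl⟩
        obtain ⟨hc, hrest⟩ := halt
        cases b
        · -- head chunk type B : prepend
          refine Or.inr (Or.inr ⟨true, x :: c :: rest, ?_, ⟨⟨hxA, hz⟩, hc, hrest⟩, ?_⟩)
          · simp
          · simp [List.prod_cons, mul_assoc]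
        · -- head chunk type A : absorb
          have hcA : typeA c := by simpa using hc
          by_cases hz' : isZ (phi (x * c))
          · have hc'B : inB (x * c) := inBofZ (injA' (inA_mul hxA hcA.1) hz')
            obtain ⟨c2, rest2, rfl⟩ := ne_nil_of_len hlen
            obtain ⟨hc2, hrest2⟩ := hrest
            have hc2B : typeB c2 := by simpa using hc2
            have hc'' : typeB ((x * c) * c2) :=
              ⟨inB_mul hc'B hc2B.1, by rw [_root_.map_mul]; exact isZ_cancel hz' hc2B.2⟩
            cases rest2 with
            | nil =>
              refine Or.inr (Or.inl ?_)
              have heq : x * (c :: c2 :: ([] : List W)).prod = (x * c) * c2 := by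
                simp [mul_assoc]
              rw [heq]; exact hc''.1
            | cons c3 rest3 =>
              refine Or.inr (Or.inr ⟨false, ((x * c) * c2) :: c3 :: rest3, ?_,
                ⟨hc'', by simpa using hrest2⟩, ?_⟩)
              · simp
              · simp [List.prod_cons, mul_assoc]
          · refine Or.inr (Or.inr ⟨true, (x * c) :: rest, by simpa using hlen,
              ⟨⟨inA_mul hxA hcA.1, hz'⟩, hrest⟩, ?_⟩)
            rw [List.prod_cons, List.prod_cons, ← mul_assoc]
    · -- type B chunk
      rcases h with hA | hB | ⟨b, l, hlen, halt, rfl⟩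
      · by_cases hzw : isZ (phi w)
        · exact Or.inr (Or.inl (inB_mul hxB (inBofZ (injA' hA hzw))))
        · refine Or.inr (Or.inr ⟨false, [x, w], ?_, ⟨⟨hxB, hz⟩, ⟨hA, hzw⟩, trivial⟩, ?_⟩)
          · simp
          · simp
      · exact Or.inr (Or.inl (inB_mul hxB hB))
      · obtain ⟨c, rest, rfl⟩ : ∃ c rest, l = c :: rest := by
          cases l with
          | nil => simp at hlen
          | cons a b => exact ⟨a, b, rfl⟩
        obtain ⟨hc, hrest⟩ := halt
        cases b
        · -- head chunk type B : absorb
          have hcB : typeB c := by simpa using hc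
          by_cases hz' : isZ (phi (x * c))
          · have hc'A : inA (x * c) := inAofZ (injB' (inB_mul hxB hcB.1) hz')
            obtain ⟨c2, rest2, rfl⟩ := ne_nil_of_len hlen
            obtain ⟨hc2, hrest2⟩ := hrest
            have hc2A : typeA c2 := by simpa using hc2
            have hc'' : typeA ((x * c) * c2) :=
              ⟨inA_mul hc'A hc2A.1, by rw [_root_.map_mul]; exact isZ_cancel hz' hc2A.2⟩
            cases rest2 with
            | nil =>
              refine Or.inl ?_
              have heq : x * (c :: c2 :: ([] : List W)).prod = (x * c) * c2 := by
                simp [mul_assoc]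
              rw [heq]; exact hc''.1
            | cons c3 rest3 =>
              refine Or.inr (Or.inr ⟨true, ((x * c) * c2) :: c3 :: rest3, ?_,
                ⟨hc'', by simpa using hrest2⟩, ?_⟩)
              · simp
              · simp [List.prod_cons, mul_assoc]
          · refine Or.inr (Or.inr ⟨false, (x * c) :: rest, by simpa using hlen,
              ⟨⟨inB_mul hxB hcB.1, hz'⟩, hrest⟩, ?_⟩)
            rw [List.prod_cons, List.prod_cons, ← mul_assoc]
        · -- head chunk type A : prepend
          refine Or.inr (Or.inr ⟨false, x :: c :: rest, ?_, ⟨⟨hxB, hz⟩, hc, hrest⟩, ?_⟩)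
          · simp
          · simp [List.prod_cons, mul_assoc]

lemma repr_all (w : W) : Repr' w := by
  refine cs.simple_induction_left w (Or.inl inA_one) (fun w i h => ?_)
  fin_cases i
  · exact mul_repr (Or.inr inB_s0) h
  · exact mul_repr (Or.inl inA_s1) h
  · exact mul_repr (Or.inl inA_s2) h

def Xs (x : Fin 3 → ℤ) : Prop := 0 < x 0 ∧ 0 < Q3 x x ∧ 0 < x 0 + x 1 + x 2
def Ys (x : Fin 3 → ℤ) : Prop := 0 < x 0 ∧ 0 < Q3 x x ∧ x 0 + x 1 + x 2 < 0
def e0 : Fin 3 → ℤ := ![1, 0, 0]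

lemma XsE0 : Xs e0 := by unfold Xs Q3 e0; decide
lemma notYsE0 : ¬ Ys e0 := by unfold Ys Q3 e0; decide

lemma fixA {w : W} (h : inA w) : (phi w).val *ᵥ e0 = e0 := by
  by_cases hz : isZ (phi w)
  · rcases hz with h1 | h1 <;> rw [h1] <;> decide
  · rcases valA h hz with h1 | h1 | h1 | h1 | h1 | h1 <;> rw [h1] <;> decide

lemma pingA {w : W} (h : inA w) (hz : ¬ isZ (phi w)) {y : Fin 3 → ℤ} (hy : Ys y) :
    Xs ((phi w).val *ᵥ y) := by
  rcases valA h hz with h1 | h1 | h1 | h1 | h1 | h1 <;> rw [h1] <;>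
    [ rw [show (Tm.val) = Matrix.of ![![1,0,0],![0,0,-1],![0,1,0]] by decide];
      rw [show ((Tm^2 : _ˣ).val) = Matrix.of ![![1,0,0],![0,-1,0],![0,0,-1]] by decide];
      rw [show ((Tm^3 : _ˣ).val) = Matrix.of ![![1,0,0],![0,0,1],![0,-1,0]] by decide];
      rw [show ((Tm*R : _ˣ).val) = Matrix.of ![![1,0,0],![0,-1,0],![0,0,1]] by decide];
      rw [show ((Tm^2*R : _ˣ).val) = Matrix.of ![![1,0,0],![0,0,-1],![0,-1,0]] by decide];
      rw [show ((Tm^3*R : _ˣ).val) = Matrix.of ![![1,0,0],![0,1,0],![0,0,-1]] by decide]] <;>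
  · simp only [Xs, Ys, Q3, Matrix.mulVec, dotProduct, Fin.sum_univ_three,
      Matrix.cons_val_zero, Matrix.cons_val_one, Matrix.head_cons, Matrix.of_apply,
      Matrix.cons_val_two, Matrix.tail_cons, Matrix.head_fin_const] at hy ⊢
    obtain ⟨h1, h2, h3⟩ := hy
    refine ⟨by nlinarith, by nlinarith, by nlinarith⟩

lemma pingB {w : W} (h : inB w) (hz : ¬ isZ (phi w)) {y : Fin 3 → ℤ} (hy : Xs y) :
    Ys ((phi w).val *ᵥ y) := by
  rcases valB h hz with h1 | h1 <;> rw [h1] <;>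
    [ rw [show (R0.val) = Matrix.of ![![3,2,2],![-2,-1,-2],![-2,-2,-1]] by decide];
      rw [show ((R0*R : _ˣ).val) = Matrix.of ![![3,2,2],![-2,-2,-1],![-2,-1,-2]] by decide]] <;>
  · simp only [Xs, Ys, Q3, Matrix.mulVec, dotProduct, Fin.sum_univ_three,
      Matrix.cons_val_zero, Matrix.cons_val_one, Matrix.head_cons, Matrix.of_apply,
      Matrix.cons_val_two, Matrix.tail_cons, Matrix.head_fin_const] at hy ⊢
    obtain ⟨h1, h2, h3⟩ := hy
    refine ⟨by nlinarith [sq_nonneg (y 1 - y 2), sq_nonneg (y 1 + y 2)], by nlinarith,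
      by nlinarith⟩

lemma cancel_vec (u : (Matrix (Fin 3) (Fin 3) ℤ)ˣ) (z : Fin 3 → ℤ) :
    (u⁻¹).val *ᵥ (u.val *ᵥ z) = z := by
  rw [Matrix.mulVec_mulVec, ← Units.val_mul, inv_mul_cancel, Units.val_one, Matrix.one_mulVec]

lemma ping_main : ∀ (l : List W) (b : Bool), altP b l → l ≠ [] →
    (cond b Xs Ys) ((phi l.prod).val *ᵥ e0) ∧
    (2 ≤ l.length → (phi l.prod).val *ᵥ e0 ≠ e0) := by
  intro l
  induction l with
  | nil => intro b _ h; exact absurd rfl h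
  | cons c rest ih =>
    intro b halt _
    obtain ⟨hc, hrest⟩ := halt
    cases rest with
    | nil =>
      simp only [List.prod_cons, List.prod_nil, mul_one]
      cases b
      · have hcB : typeB c := by simpa using hc
        refine ⟨?_, by intro h; simp at h⟩
        simpa using pingB hcB.1 hcB.2 XsE0
      · have hcA : typeA c := by simpa using hc
        refine ⟨?_, by intro h; simp at h⟩
        simpa [fixA hcA.1] using XsE0
    | cons c2 rest2 =>
      have hne : (c2 :: rest2 : List W) ≠ [] := by simp
      have ihh := ih (!b) hrest hne
      have hsplit : (phi ((c :: c2 :: rest2).prod)).val *ᵥ e0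
          = (phi c).val *ᵥ ((phi ((c2 :: rest2 : List W).prod)).val *ᵥ e0) := by
        rw [List.prod_cons, _root_.map_mul, Units.val_mul, Matrix.mulVec_mulVec]
      rw [hsplit]
      set v' := (phi ((c2 :: rest2 : List W).prod)).val *ᵥ e0 with hv'
      cases b
      · -- head type B
        have hcB : typeB c := by simpa using hc
        have hXv' : Xs v' := by simpa using ihh.1
        have hY : Ys ((phi c).val *ᵥ v') := pingB hcB.1 hcB.2 hXv'
        refine ⟨by simpa using hY, fun _ h => notYsE0 (h ▸ hY)⟩
      · -- head type A
        have hcA : typeA c := by simpa using hc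
        have hYv' : Ys v' := by simpa using ihh.1
        have hX : Xs ((phi c).val *ᵥ v') := pingA hcA.1 hcA.2 hYv'
        refine ⟨by simpa using hX, fun _ h => ?_⟩
        have : v' = e0 := by
          have h2 := congrArg (fun z => ((phi c)⁻¹).val *ᵥ z) h
          simp only [cancel_vec] at h2
          rw [h2, ← fixA hcA.1, cancel_vec]
          exact (fixA hcA.1).symm
        exact notYsE0 (this ▸ hYv')

lemma phi_inj : Function.Injective phi := by
  refine (injective_iff_map_eq_one phi).mpr (fun w hw => ?_)
  rcases repr_all w with hA | hB | ⟨b, l, hlen, halt, rfl⟩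
  · exact injA1 hA hw
  · exact injB1 hB hw
  · exfalso
    refine (ping_main l b halt (by rintro rfl; simp at hlen)).2 hlen ?_
    rw [hw, Units.val_one, Matrix.one_mulVec]

/-! ### Surjectivity onto O⁺(2,1)(ℤ) -/


lemma hJJ : J3 * J3 = 1 := by decide
lemma o_trans {A : Matrix (Fin 3) (Fin 3) ℤ} (h : Aᵀ * J3 * A = J3) : A * J3 * Aᵀ = J3 := by
  have h1 : (J3 * (Aᵀ * J3)) * A = 1 := by
    rw [Matrix.mul_assoc]
    rw [show Aᵀ * J3 * A = J3 from h]
    exact hJJ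
  have h2 := mul_eq_one_comm.mp h1
  simp only [← Matrix.mul_assoc] at h2
  calc A * J3 * Aᵀ = (A * J3 * Aᵀ) * (J3 * J3) := by rw [hJJ, Matrix.mul_one]
    _ = ((A * J3 * Aᵀ) * J3) * J3 := by simp only [Matrix.mul_assoc]
    _ = 1 * J3 := by rw [h2]
    _ = J3 := Matrix.one_mul J3

lemma rel00 {M : Matrix (Fin 3) (Fin 3) ℤ} (h : Mᵀ * J3 * M = J3) :
    M 0 0 * M 0 0 - M 1 0 * M 1 0 - M 2 0 * M 2 0 = 1 := by
  have h0 := congrFun (congrFun h 0) 0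
  simp [Matrix.mul_apply, Fin.sum_univ_three, J3, Matrix.diagonal_apply] at h0
  linarith
lemma rel11 {M : Matrix (Fin 3) (Fin 3) ℤ} (h : Mᵀ * J3 * M = J3) :
    M 0 1 * M 0 1 - M 1 1 * M 1 1 - M 2 1 * M 2 1 = -1 := by
  have h0 := congrFun (congrFun h 1) 1
  simp [Matrix.mul_apply, Fin.sum_univ_three, J3, Matrix.diagonal_apply] at h0
  linarith
lemma rel22 {M : Matrix (Fin 3) (Fin 3) ℤ} (h : Mᵀ * J3 * M = J3) :
    M 0 2 * M 0 2 - M 1 2 * M 1 2 - M 2 2 * M 2 2 = -1 := by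
  have h0 := congrFun (congrFun h 2) 2
  simp [Matrix.mul_apply, Fin.sum_univ_three, J3, Matrix.diagonal_apply] at h0
  linarith
lemma rel12 {M : Matrix (Fin 3) (Fin 3) ℤ} (h : Mᵀ * J3 * M = J3) :
    M 0 1 * M 0 2 - M 1 1 * M 1 2 - M 2 1 * M 2 2 = 0 := by
  have h0 := congrFun (congrFun h 1) 2
  simp [Matrix.mul_apply, Fin.sum_univ_three, J3, Matrix.diagonal_apply] at h0
  linarith

lemma opos_mul {A B : (Matrix (Fin 3) (Fin 3) ℤ)ˣ} (hA : A ∈ Oplus21) (hB : B ∈ Oplus21) :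
    A * B ∈ Oplus21 := by
  obtain ⟨hAJ, hApos⟩ := hA
  obtain ⟨hBJ, hBpos⟩ := hB
  constructor
  · show ((A.val * B.val)ᵀ) * J3 * (A.val * B.val) = J3
    rw [Matrix.transpose_mul]
    calc B.valᵀ * A.valᵀ * J3 * (A.val * B.val)
        = B.valᵀ * ((A.valᵀ * J3 * A.val) * B.val) := by simp only [Matrix.mul_assoc]
      _ = B.valᵀ * (J3 * B.val) := by rw [hAJ]
      _ = B.valᵀ * J3 * B.val := by rw [Matrix.mul_assoc]
      _ = J3 := hBJ
  · show 0 < (A.val * B.val) 0 0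
    have hrow : A.val 0 0 * A.val 0 0 - A.val 0 1 * A.val 0 1 - A.val 0 2 * A.val 0 2 = 1 := by
      have h := rel00 (M := A.valᵀ) (by rw [Matrix.transpose_transpose]; exact o_trans hAJ)
      simpa [Matrix.transpose_apply] using h
    have hcol := rel00 hBJ
    have hentry : (A.val * B.val) 0 0
        = A.val 0 0 * B.val 0 0 + A.val 0 1 * B.val 1 0 + A.val 0 2 * B.val 2 0 := by
      simp [Matrix.mul_apply, Fin.sum_univ_three]
    rw [hentry]
    nlinarith [sq_nonneg (A.val 0 1 * B.val 2 0 - A.val 0 2 * B.val 1 0),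
      mul_pos hApos hBpos, hApos, hBpos,
      sq_nonneg (A.val 0 0 - B.val 0 0), sq_nonneg (A.val 0 0 + B.val 0 0)]

lemma sq1 {p q : ℤ} (h : p * p + q * q = 1) :
    (p = 0 ∧ (q = 1 ∨ q = -1)) ∨ (q = 0 ∧ (p = 1 ∨ p = -1)) := by
  have hp1 : p ≤ 1 := by nlinarith
  have hp2 : -1 ≤ p := by nlinarith
  have hq1 : q ≤ 1 := by nlinarith
  have hq2 : -1 ≤ q := by nlinarith
  interval_cases p <;> interval_cases q <;> omega

lemma key_wit {A B : (Matrix (Fin 3) (Fin 3) ℤ)ˣ} (w : W) (hw : phi w = B)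
    (hval : A.val = B.val) : ∃ w : W, phi w = A :=
  ⟨w, hw.trans (Units.ext hval.symm)⟩

lemma classifyA {A : (Matrix (Fin 3) (Fin 3) ℤ)ˣ} (hA : A ∈ Oplus21)
    (h1 : A.val 0 0 = 1) : ∃ w : W, phi w = A := by
  obtain ⟨hJ, hpos⟩ := hA
  have hJ' : A.val * J3 * A.valᵀ = J3 := o_trans hJ
  have hcol := rel00 hJ
  have hrow := rel00 (M := A.valᵀ) (by rw [Matrix.transpose_transpose]; exact hJ')
  simp only [Matrix.transpose_apply] at hrow
  rw [h1] at hcol hrow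
  have h10 : A.val 1 0 = 0 := by nlinarith [sq_nonneg (A.val 1 0), sq_nonneg (A.val 2 0)]
  have h20 : A.val 2 0 = 0 := by nlinarith [sq_nonneg (A.val 1 0), sq_nonneg (A.val 2 0)]
  have h01 : A.val 0 1 = 0 := by nlinarith [sq_nonneg (A.val 0 1), sq_nonneg (A.val 0 2)]
  have h02 : A.val 0 2 = 0 := by nlinarith [sq_nonneg (A.val 0 1), sq_nonneg (A.val 0 2)]
  have c11 : A.val 1 1 * A.val 1 1 + A.val 2 1 * A.val 2 1 = 1 := by
    have := rel11 hJ; rw [h01] at this; nlinarith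
  have c22 : A.val 1 2 * A.val 1 2 + A.val 2 2 * A.val 2 2 = 1 := by
    have := rel22 hJ; rw [h02] at this; nlinarith
  have c12 : A.val 1 1 * A.val 1 2 + A.val 2 1 * A.val 2 2 = 0 := by
    have := rel12 hJ; rw [h01] at this; nlinarith
  rcases sq1 c11 with ⟨e11, e21⟩ | ⟨e21, e11⟩
  · have h22 : A.val 2 2 = 0 := by
      rcases e21 with e | e <;> rw [e11, e] at c12 <;> linarith
    have h12 : A.val 1 2 = 1 ∨ A.val 1 2 = -1 := by
      rw [h22] at c22
      rcases sq1 (p := A.val 1 2) (q := 0) (by linarith) with ⟨_, _⟩ | ⟨_, h⟩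
      · omega
      · exact h
    rcases e21 with e21 | e21 <;> rcases h12 with h12 | h12
    · refine key_wit s1 phi_s1 ?_
      rw [Matrix.eta_fin_three (A.val), h1, h10, h20, h01, h02, e11, e21, h12, h22]; decide
    · refine key_wit tw phi_tw ?_
      rw [Matrix.eta_fin_three (A.val), h1, h10, h20, h01, h02, e11, e21, h12, h22]; decide
    · refine key_wit (tw^3) (by rw [map_pow, phi_tw]) ?_
      rw [Matrix.eta_fin_three (A.val), h1, h10, h20, h01, h02, e11, e21, h12, h22]; decide
    · refine key_wit (tw^2 * s1) (by rw [_root_.map_mul, map_pow, phi_tw, phi_s1]) ?_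
      rw [Matrix.eta_fin_three (A.val), h1, h10, h20, h01, h02, e11, e21, h12, h22]; decide
  · have h12 : A.val 1 2 = 0 := by
      rcases e11 with e | e <;> rw [e21, e] at c12 <;> linarith
    have h22 : A.val 2 2 = 1 ∨ A.val 2 2 = -1 := by
      rw [h12] at c22
      rcases sq1 (p := (0:ℤ)) (q := A.val 2 2) (by linarith) with ⟨_, h⟩ | ⟨h, _⟩
      · exact h
      · omega
    rcases e11 with e11 | e11 <;> rcases h22 with h22 | h22
    · refine key_wit 1 (map_one phi) ?_
      rw [Matrix.eta_fin_three (A.val), h1, h10, h20, h01, h02, e11, e21, h12, h22]; decide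
    · refine key_wit (tw^3 * s1) (by rw [_root_.map_mul, map_pow, phi_tw, phi_s1]) ?_
      rw [Matrix.eta_fin_three (A.val), h1, h10, h20, h01, h02, e11, e21, h12, h22]; decide
    · refine key_wit (tw * s1) (by rw [_root_.map_mul, phi_tw, phi_s1]) ?_
      rw [Matrix.eta_fin_three (A.val), h1, h10, h20, h01, h02, e11, e21, h12, h22]; decide
    · refine key_wit (tw^2) (by rw [map_pow, phi_tw]) ?_
      rw [Matrix.eta_fin_three (A.val), h1, h10, h20, h01, h02, e11, e21, h12, h22]; decide

lemma intsq {a c : ℤ} (ha : 2 ≤ a) (h : a * a - c * c = 1) : False := by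
  have h1 : (a - c) * (a + c) = 1 := by ring_nf; linarith
  rcases Int.mul_eq_one_iff_eq_one_or_neg_one.mp h1 with ⟨h2, h3⟩ | ⟨h2, h3⟩ <;> omega

lemma descent_step {A g : (Matrix (Fin 3) (Fin 3) ℤ)ˣ} (hA : A ∈ Oplus21)
    (hgO : g ∈ Oplus21) (hgg : g * g = 1) (wg : W) (hwg : phi wg = g)
    (ih : ∀ B, B ∈ Oplus21 → B.val 0 0 < A.val 0 0 → ∃ w : W, phi w = B)
    (hlt : (R0 * (g * A)).val 0 0 < A.val 0 0) : ∃ w : W, phi w = A := by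
  have hR0O : R0 ∈ Oplus21 := ⟨by decide, by decide⟩
  have hA'O := opos_mul hR0O (opos_mul hgO hA)
  obtain ⟨w', hw'⟩ := ih _ hA'O hlt
  refine ⟨wg * (s0 * w'), ?_⟩
  rw [_root_.map_mul, _root_.map_mul, hwg, phi_s0, hw']
  rw [← mul_assoc R0, show R0 * R0 = 1 by decide, one_mul, ← mul_assoc, hgg, one_mul]

lemma entry00 {g A : (Matrix (Fin 3) (Fin 3) ℤ)ˣ} {u v : ℤ}
    (hg : g.val = Matrix.of ![![1,0,0],![0,u,0],![0,0,v]]) :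
    (R0 * (g * A)).val 0 0 = 3 * A.val 0 0 + 2 * (u * A.val 1 0) + 2 * (v * A.val 2 0) := by
  rw [Units.val_mul, Units.val_mul, hg,
    show R0.val = Matrix.of ![![3,2,2],![-2,-1,-2],![-2,-2,-1]] by decide]
  simp [Matrix.mul_apply, Matrix.vecMul, dotProduct, Fin.sum_univ_three]
  try ring

lemma desc_ineq {a p q : ℤ} (ha : 2 ≤ a) (h1 : p ≤ -1) (h2 : q ≤ -1)
    (hcol : a * a - p * p - q * q = 1) : 3 * a + 2 * p + 2 * q < a := by
  have h4 : 0 ≤ a - p - q := by linarith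
  have hpq : 1 ≤ p * q := by nlinarith
  nlinarith [h4, hpq, hcol]

lemma surj_aux : ∀ n : ℕ, ∀ A : (Matrix (Fin 3) (Fin 3) ℤ)ˣ, A ∈ Oplus21 →
    A.val 0 0 ≤ (n : ℤ) → ∃ w : W, phi w = A := by
  intro n
  induction n with
  | zero => intro A hA hle; exact absurd hA.2 (by omega)
  | succ n ih =>
    intro A hA hle
    by_cases h1 : A.val 0 0 = 1
    · exact classifyA hA h1
    · have ha : 2 ≤ A.val 0 0 := by have := hA.2; omega
      have hcol := rel00 hA.1
      have hb : A.val 1 0 ≠ 0 := by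
        intro h; rw [h] at hcol
        exact intsq ha (c := A.val 2 0) (by linarith)
      have hc : A.val 2 0 ≠ 0 := by
        intro h; rw [h] at hcol
        exact intsq ha (c := A.val 1 0) (by linarith)
      have ih' : ∀ B, B ∈ Oplus21 → B.val 0 0 < A.val 0 0 → ∃ w : W, phi w = B := by
        intro B hB hlt
        exact ih B hB (by omega)
      rcases le_or_gt (A.val 1 0) 0 with hb' | hb' <;> rcases le_or_gt (A.val 2 0) 0 with hc' | hc'
      · refine descent_step (g := 1) hA ⟨by decide, by decide⟩ (by decide) 1 (_root_.map_one phi) ih' ?_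
        rw [entry00 (u := 1) (v := 1) (by decide)]
        have := desc_ineq ha (p := A.val 1 0) (q := A.val 2 0) (by omega) (by omega) (by linarith)
        linarith
      · refine descent_step (g := refE2) hA ⟨by decide, by decide⟩ (by decide) s2 phi_s2 ih' ?_
        rw [entry00 (u := 1) (v := -1) (by decide)]
        have := desc_ineq ha (p := A.val 1 0) (q := -A.val 2 0) (by omega) (by omega) (by nlinarith)
        linarith
      · refine descent_step (g := Tm * R) hA ⟨by decide, by decide⟩ (by decide) (tw * s1)
          (by rw [_root_.map_mul, phi_tw, phi_s1]) ih' ?_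
        rw [entry00 (u := -1) (v := 1) (by decide)]
        have := desc_ineq ha (p := -A.val 1 0) (q := A.val 2 0) (by omega) (by omega) (by nlinarith)
        linarith
      · refine descent_step (g := Tm^2) hA ⟨by decide, by decide⟩ (by decide) (tw^2)
          (by rw [map_pow, phi_tw]) ih' ?_
        rw [entry00 (u := -1) (v := -1) (by decide)]
        have := desc_ineq ha (p := -A.val 1 0) (q := -A.val 2 0) (by omega) (by omega) (by nlinarith)
        linarith

lemma range_phi : Set.range phi = Oplus21 := by
  apply Set.eq_of_subset_of_subset
  · rintro _ ⟨w, rfl⟩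
    induction w using CoxeterSystem.simple_induction_left cs with
    | one => rw [_root_.map_one]; exact ⟨by decide, by decide⟩
    | mul_simple_left w i hw =>
      rw [_root_.map_mul]
      refine opos_mul ?_ hw
      have hsim : phi (cs.simple i) = fgen i := phi_simple i
      rw [hsim]
      fin_cases i <;> exact ⟨by decide, by decide⟩
  · intro A hA
    exact surj_aux (A.val 0 0).toNat A hA (by omega)

/-! ### `r₀ r₂` has infinite order -/

def Nm : Matrix (Fin 3) (Fin 3) ℤ := (refHE1E2 * refE2).val
def Pm : Matrix (Fin 3) (Fin 3) ℤ := Nm - 1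

lemma hNm : Nm = 1 + Pm := by rw [Pm]; abel
lemma hPcube : Pm * Pm * Pm = 0 := by decide

lemma pow_form : ∀ n : ℕ, Nm ^ n = 1 + (n : ℤ) • Pm + ((n.choose 2 : ℤ)) • (Pm * Pm) := by
  intro n
  induction n with
  | zero => simp
  | succ n ih =>
    rw [pow_succ, ih, hNm]
    simp only [add_mul, mul_add, mul_one, one_mul, smul_mul_assoc]
    rw [show Pm * Pm * Pm = 0 from hPcube, smul_zero, add_zero]
    have hch : ((n+1).choose 2 : ℤ) = (n.choose 2 : ℤ) + (n : ℤ) := by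
      rw [show (n+1).choose 2 = n.choose 1 + n.choose 2 from Nat.choose_succ_succ n 1]
      push_cast [Nat.choose_one_right]
      ring
    rw [hch]
    push_cast
    rw [add_smul, add_smul, one_smul]
    abel

lemma NnEntry (n : ℕ) : (Nm ^ n) 0 0 = 1 + 2 * (n : ℤ) + 4 * ((n.choose 2 : ℤ)) := by
  rw [pow_form]
  have e1 : (1 : Matrix (Fin 3) (Fin 3) ℤ) 0 0 = 1 := by decide
  have e2 : Pm 0 0 = 2 := by decide
  have e3 : (Pm * Pm) 0 0 = 4 := by decide
  simp only [Matrix.add_apply, Matrix.smul_apply, smul_eq_mul]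
  rw [e1, e2, e3]
  ring

lemma notFin : ¬ IsOfFinOrder (refHE1E2 * refE2) := by
  intro h
  obtain ⟨n, hn, hpow⟩ := isOfFinOrder_iff_pow_eq_one.mp h
  have hm : Nm ^ n = 1 := by
    have := congrArg Units.val hpow
    rwa [Units.val_pow_eq_pow_val] at this
  have := congrFun (congrFun hm 0) 0
  rw [NnEntry] at this
  have he : (1 : Matrix (Fin 3) (Fin 3) ℤ) 0 0 = 1 := by decide
  rw [he] at this
  omega

/-- `O⁺(2,1)(ℤ)` with the generators `(r₀, r₁, r₂) = (Ref_{H−E₁−E₂}, Ref_{E₁−E₂}, Ref_{E₂})`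
is a Coxeter system of type `Δ(2,4,∞)`: there is an injective homomorphism from the Coxeter
group of `triangleMatrix` onto `O⁺(2,1)(ℤ)` carrying the simple generators to `r₀, r₁, r₂`;
moreover `r₀r₂` has infinite order. -/
theorem Oplus21_coxeter_system :
    ∃ φ : triangleMatrix.Group →* (Matrix (Fin 3) (Fin 3) ℤ)ˣ,
      Function.Injective φ ∧
      Set.range φ = Oplus21 ∧
      φ (triangleMatrix.simple 0) = refHE1E2 ∧
      φ (triangleMatrix.simple 1) = refE1E2 ∧
      φ (triangleMatrix.simple 2) = refE2 ∧
      ¬ IsOfFinOrder (refHE1E2 * refE2) := by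
  exact ⟨phi, phi_inj, range_phi, phi_simple 0, phi_simple 1, phi_simple 2, notFin⟩

end
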